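/- Let X be a compact metric space, μ a Borel probability measure on X, and (ν_x)_{x ∈ X} a family of locally finite Borel measures on ℝ such that for every continuous compactly supported function φ : ℝ → ℝ the map x ↦ ∫ φ dν_x is Borel measurable. Then for every δ > 0 there exists a compact set A ⊆ X with μ(A) > 1 − δ such that for every sequence (x_n) in A converging to a point x ∈ A and every continuous compactly supported φ : ℝ → ℝ, one has ∫ φ dν_{x_n} → ∫ φ dν_x. -/

import Mathlib

open MeasureTheory Filter Set
open scoped ENNReal


theorem my_lusin {X : Type*} [MetricSpace X] [CompactSpace X]
    [MeasurableSpace X] [BorelSpace X]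
    (μ : Measure X) [IsFiniteMeasure μ] (f : X → ℝ) (hf : Measurable f)
    {ε : ℝ} (hε : 0 < ε) :
    ∃ K : Set X, IsCompact K ∧ μ Kᶜ ≤ ENNReal.ofReal ε ∧ ContinuousOn f K := by
  haveI wr : μ.WeaklyRegular :=
    (Measure.InnerRegularWRT.of_pseudoMetrizableSpace μ).weaklyRegular_of_finite μ
  haveI : μ.InnerRegularCompactLTTop := by
    constructor
    intro s hs r hr
    obtain ⟨F, hFs, hFc, hFr⟩ := Measure.WeaklyRegular.innerRegular_measurable hs r hr
    exact ⟨F, hFs, hFc.isCompact, hFr⟩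
  -- bounded version via arctan
  set h : X → ℝ := fun x => Real.arctan (f x) with hh
  have hmeas_h : Measurable h := Real.measurable_arctan.comp hf
  have hint : Integrable h μ := by
    refine (integrable_const (Real.pi / 2)).mono' hmeas_h.aestronglyMeasurable ?_
    filter_upwards with x
    rw [Real.norm_eq_abs, abs_le]
    constructor
    · exact (Real.neg_pi_div_two_lt_arctan (f x)).le
    · exact (Real.arctan_lt_pi_div_two (f x)).le
  have hmem : MemLp h 1 μ := memLp_one_iff_integrable.mpr hint
  have hg : ∀ n : ℕ, ∃ g : X → ℝ, HasCompactSupport g ∧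
      eLpNorm (h - g) 1 μ ≤ (n : ℝ≥0∞)⁻¹ ∧ Continuous g ∧ MemLp g 1 μ := fun n =>
    hmem.exists_hasCompactSupport_eLpNorm_sub_le (by norm_num)
      (ENNReal.inv_ne_zero.mpr (ENNReal.natCast_ne_top n))
  choose g hgsupp hgnorm hgcont hgmem using hg
  have htim : TendstoInMeasure μ g atTop h := by
    refine tendstoInMeasure_of_tendsto_eLpNorm (p := 1) one_ne_zero
      (fun n => (hgcont n).aestronglyMeasurable) hmeas_h.aestronglyMeasurable ?_
    have : ∀ n : ℕ, eLpNorm (g n - h) 1 μ ≤ (n : ℝ≥0∞)⁻¹ := by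
      intro n
      rw [← eLpNorm_neg, neg_sub]
      exact hgnorm n
    exact tendsto_of_tendsto_of_tendsto_of_le_of_le tendsto_const_nhds
      ENNReal.tendsto_inv_nat_nhds_zero (fun n => zero_le) this
  obtain ⟨ns, -, hae⟩ := htim.exists_seq_tendsto_ae
  obtain ⟨t, htm, htμ, htu⟩ := tendstoUniformlyOn_of_ae_tendsto'
    (fun i => (hgcont (ns i)).stronglyMeasurable) hmeas_h.stronglyMeasurable hae
    (half_pos hε)
  have hcont_h : ContinuousOn h tᶜ :=
    htu.continuousOn (Frequently.of_forall fun i => (hgcont (ns i)).continuousOn)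
  obtain ⟨K, hKt, hKcl, hKμ⟩ := htm.compl.exists_isClosed_diff_lt (measure_ne_top μ _)
    (ne_of_gt (ENNReal.ofReal_pos.mpr (half_pos hε)))
  refine ⟨K, hKcl.isCompact, ?_, ?_⟩
  · have hsub : Kᶜ ⊆ t ∪ (tᶜ \ K) := by
      intro y hy
      by_cases hyt : y ∈ t
      · exact Or.inl hyt
      · exact Or.inr ⟨hyt, hy⟩
    calc μ Kᶜ ≤ μ (t ∪ (tᶜ \ K)) := measure_mono hsub
      _ ≤ μ t + μ (tᶜ \ K) := measure_union_le _ _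
      _ ≤ ENNReal.ofReal (ε / 2) + ENNReal.ofReal (ε / 2) := by
          exact add_le_add htμ hKμ.le
      _ = ENNReal.ofReal ε := by
          rw [← ENNReal.ofReal_add (by linarith) (by linarith)]
          norm_num
  · have hfh : f = fun x => Real.tan (h x) := by
      funext x; rw [hh]; simp [Real.tan_arctan]
    rw [hfh]
    intro x hx
    have h1 : ContinuousAt Real.tan (h x) :=
      Real.continuousAt_tan.mpr (ne_of_gt (Real.cos_arctan_pos (f x)))
    exact h1.comp_continuousWithinAt ((hcont_h.mono hKt) x hx)


noncomputable def chiFn (m : ℕ) : ℝ → ℝ := fun y => max 0 (min 1 ((m : ℝ) + 1 - |y|))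

lemma chiFn_cont (m : ℕ) : Continuous (chiFn m) :=
  continuous_const.max (continuous_const.min (continuous_const.sub continuous_abs))

lemma chiFn_nonneg (m : ℕ) (y : ℝ) : 0 ≤ chiFn m y := le_max_left _ _

lemma chiFn_le_one (m : ℕ) (y : ℝ) : chiFn m y ≤ 1 :=
  max_le zero_le_one (min_le_left _ _)

lemma chiFn_eq_one {m : ℕ} {y : ℝ} (h : |y| ≤ m) : chiFn m y = 1 := by
  have : (1 : ℝ) ≤ (m : ℝ) + 1 - |y| := by linarith
  simp only [chiFn, min_eq_left this, max_eq_right zero_le_one]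

lemma chiFn_eq_zero {m : ℕ} {y : ℝ} (h : (m : ℝ) + 1 ≤ |y|) : chiFn m y = 0 := by
  have h1 : (m : ℝ) + 1 - |y| ≤ 0 := by linarith
  have : min 1 ((m : ℝ) + 1 - |y|) ≤ 0 := le_trans (min_le_right _ _) h1
  simp only [chiFn, max_eq_left this]

lemma chiFn_supp (m : ℕ) : HasCompactSupport (chiFn m) := by
  apply HasCompactSupport.intro (isCompact_Icc (a := -((m : ℝ) + 1)) (b := (m : ℝ) + 1))
  intro y hy
  apply chiFn_eq_zero
  by_contra h
  push_neg at h
  exact hy (mem_Icc.mpr (abs_le.mp h.le))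

noncomputable def extFn (m : ℕ)
    (g : C(↥(Set.Icc (-((m : ℝ) + 1)) ((m : ℝ) + 1)), ℝ)) : ℝ → ℝ :=
  fun y => g (Set.projIcc (-((m : ℝ) + 1)) ((m : ℝ) + 1) (by have h0 : (0:ℝ) ≤ m := Nat.cast_nonneg m; linarith) y)
    * chiFn m y

lemma extFn_cont (m : ℕ) (g) : Continuous (extFn m g) :=
  ((map_continuous g).comp continuous_projIcc).mul (chiFn_cont m)

lemma extFn_supp (m : ℕ) (g) : HasCompactSupport (extFn m g) :=
  HasCompactSupport.mul_left (chiFn_supp m)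

lemma extFn_approx {m : ℕ} {φ : ℝ → ℝ} (hsupp : ∀ y : ℝ, (m : ℝ) < |y| → φ y = 0)
    {g : C(↥(Set.Icc (-((m : ℝ) + 1)) ((m : ℝ) + 1)), ℝ)} {η : ℝ} (hη : 0 ≤ η)
    (hg : ∀ y : ↥(Set.Icc (-((m : ℝ) + 1)) ((m : ℝ) + 1)), |φ y - g y| ≤ η) :
    ∀ y : ℝ, |φ y - extFn m g y| ≤ η * chiFn m y := by
  intro y
  by_cases hy : y ∈ Set.Icc (-((m : ℝ) + 1)) ((m : ℝ) + 1)
  · have hproj : Set.projIcc (-((m : ℝ) + 1)) ((m : ℝ) + 1)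
        (by have h0 : (0:ℝ) ≤ m := Nat.cast_nonneg m; linarith) y = ⟨y, hy⟩ := Set.projIcc_of_mem _ hy
    have key : φ y - extFn m g y
        = (φ y - g ⟨y, hy⟩) * chiFn m y + φ y * (1 - chiFn m y) := by
      simp only [extFn, hproj]; ring
    rw [key]
    have h1 : |(φ y - g ⟨y, hy⟩) * chiFn m y| ≤ η * chiFn m y := by
      rw [abs_mul, abs_of_nonneg (chiFn_nonneg m y)]
      exact mul_le_mul_of_nonneg_right (hg ⟨y, hy⟩) (chiFn_nonneg m y)
    have h2 : |φ y * (1 - chiFn m y)| = 0 := by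
      by_cases hym : |y| ≤ (m : ℝ)
      · rw [chiFn_eq_one hym]; simp
      · rw [hsupp y (lt_of_not_ge hym)]; simp
    calc |(φ y - g ⟨y, hy⟩) * chiFn m y + φ y * (1 - chiFn m y)|
        ≤ |(φ y - g ⟨y, hy⟩) * chiFn m y| + |φ y * (1 - chiFn m y)| := abs_add_le _ _
      _ ≤ η * chiFn m y + 0 := by rw [h2]; exact add_le_add_left h1 0
      _ = η * chiFn m y := by ring
  · have h0 : (0:ℝ) ≤ m := Nat.cast_nonneg m
    have hym : (m : ℝ) + 1 ≤ |y| := by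
      rw [mem_Icc, not_and_or] at hy
      rcases hy with hy | hy
      · push_neg at hy
        rw [abs_of_nonpos (by linarith)]; linarith
      · push_neg at hy
        rw [abs_of_nonneg (by linarith)]; linarith
    have hφ : φ y = 0 := hsupp y (by linarith)
    rw [hφ, chiFn_eq_zero hym]
    simp [extFn, chiFn_eq_zero hym]


/-- Lusin-type lemma for measurable families of locally finite measures on `ℝ`:
for every `δ > 0`, there is a compact set `A` of measure `> 1 − δ` on which the
family is vaguely continuous along sequences. -/
theorem stmt12 {X : Type*} [MetricSpace X] [CompactSpace X]
    [MeasurableSpace X] [BorelSpace X]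
    (μ : Measure X) [IsProbabilityMeasure μ]
    (ν : X → Measure ℝ) (hfin : ∀ x, IsLocallyFiniteMeasure (ν x))
    (hmeas : ∀ φ : ℝ → ℝ, Continuous φ → HasCompactSupport φ →
      Measurable fun x => ∫ y, φ y ∂(ν x))
    (δ : ℝ) (hδ : 0 < δ) :
    ∃ A : Set X, IsCompact A ∧ ENNReal.ofReal (1 - δ) < μ A ∧
      ∀ (xs : ℕ → X) (x : X), (∀ n, xs n ∈ A) → x ∈ A →
        Tendsto xs atTop (nhds x) →
        ∀ φ : ℝ → ℝ, Continuous φ → HasCompactSupport φ →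
          Tendsto (fun n => ∫ y, φ y ∂(ν (xs n))) atTop (nhds (∫ y, φ y ∂(ν x))) := by
  classical
  -- countable dense sets of continuous maps on the intervals
  have hDex : ∀ m : ℕ, ∃ s : Set C(↥(Set.Icc (-((m : ℝ) + 1)) ((m : ℝ) + 1)), ℝ),
      s.Countable ∧ Dense s := fun m => TopologicalSpace.exists_countable_dense _
  choose D hDc hDd using hDex
  -- the countable family of test functions
  set S : Set (ℝ → ℝ) := (⋃ m, extFn m '' D m) ∪ Set.range chiFn with hSdef
  have hSc : S.Countable :=
    ((Set.countable_iUnion fun m => (hDc m).image _).union (Set.countable_range _))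
  have hSne : S.Nonempty := ⟨chiFn 0, Or.inr ⟨0, rfl⟩⟩
  obtain ⟨e, he⟩ := hSc.exists_eq_range hSne
  have heS : ∀ k, e k ∈ S := fun k => he ▸ Set.mem_range_self k
  have hS_cont : ∀ f ∈ S, Continuous f ∧ HasCompactSupport f := by
    intro f hf
    rcases hf with hf | ⟨m, rfl⟩
    · obtain ⟨t, ht⟩ := Set.mem_iUnion.mp hf
      obtain ⟨g, hg, rfl⟩ := ht
      exact ⟨extFn_cont t g, extFn_supp t g⟩
    · exact ⟨chiFn_cont m, chiFn_supp m⟩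
  set δ₀ : ℝ := min δ 1 with hδ₀def
  have hδ₀ : 0 < δ₀ := lt_min hδ one_pos
  have hδ₀δ : δ₀ ≤ δ := min_le_left _ _
  have hδ₀1 : δ₀ ≤ 1 := min_le_right _ _
  -- Lusin for each test function
  have hlusin : ∀ k : ℕ, ∃ K : Set X, IsCompact K ∧
      μ Kᶜ ≤ ENNReal.ofReal (δ₀ / 4 * (1 / 2) ^ k) ∧
      ContinuousOn (fun x => ∫ y, e k y ∂(ν x)) K := fun k =>
    my_lusin μ _ (hmeas _ (hS_cont _ (heS k)).1 (hS_cont _ (heS k)).2) (by positivity)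
  choose A hAc hAμ hAcont using hlusin
  have hA_closed : IsClosed (⋂ k, A k) := isClosed_iInter fun k => (hAc k).isClosed
  have hA_meas : MeasurableSet (⋂ k, A k) := hA_closed.measurableSet
  refine ⟨⋂ k, A k, hA_closed.isCompact, ?_, ?_⟩
  · -- measure estimate
    have hcomp : μ (⋂ k, A k)ᶜ ≤ ENNReal.ofReal (δ₀ / 2) := by
      rw [Set.compl_iInter]
      refine le_trans (measure_iUnion_le _) ?_
      calc ∑' k, μ (A k)ᶜ ≤ ∑' k : ℕ, ENNReal.ofReal (δ₀ / 4 * (1 / 2) ^ k) :=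
            ENNReal.tsum_le_tsum hAμ
        _ = ENNReal.ofReal (∑' k : ℕ, δ₀ / 4 * (1 / 2) ^ k) :=
            (ENNReal.ofReal_tsum_of_nonneg (fun k => by positivity)
              (summable_geometric_two.mul_left _)).symm
        _ = ENNReal.ofReal (δ₀ / 4 * 2) := by rw [tsum_mul_left, tsum_geometric_two]
        _ = ENNReal.ofReal (δ₀ / 2) := by congr 1; ring
    have h1 : μ (⋂ k, A k) = 1 - μ ((⋂ k, A k)ᶜ) := by
      have := prob_compl_eq_one_sub (μ := μ) hA_meas.compl
      rwa [compl_compl] at this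
    calc ENNReal.ofReal (1 - δ) ≤ ENNReal.ofReal (1 - δ₀) :=
          ENNReal.ofReal_le_ofReal (by linarith)
      _ < ENNReal.ofReal (1 - δ₀ / 2) := by
          rw [ENNReal.ofReal_lt_ofReal_iff (by linarith)]
          linarith
      _ ≤ 1 - ENNReal.ofReal (δ₀ / 2) := by
          rw [ENNReal.ofReal_sub _ (by positivity), ENNReal.ofReal_one]
      _ ≤ 1 - μ ((⋂ k, A k)ᶜ) := tsub_le_tsub_left hcomp 1
      _ = μ (⋂ k, A k) := h1.symm
  · -- continuity along sequences
    intro xs x hxs hx hxtend φ hφc hφsupp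
    have hkey : ∀ k : ℕ, Tendsto (fun n => ∫ y, e k y ∂(ν (xs n))) atTop
        (nhds (∫ y, e k y ∂(ν x))) := by
      intro k
      have h1 : ContinuousWithinAt (fun x => ∫ y, e k y ∂(ν x)) (⋂ j, A j) x :=
        ((hAcont k).mono (Set.iInter_subset A k)) x hx
      have h2 : Tendsto xs atTop (nhdsWithin x (⋂ j, A j)) :=
        tendsto_nhdsWithin_iff.mpr ⟨hxtend, Eventually.of_forall hxs⟩
      exact h1.tendsto.comp h2
    -- choose m such that φ vanishes outside [-m, m]
    obtain ⟨r, hr⟩ := hφsupp.isBounded.subset_closedBall 0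
    set m : ℕ := ⌈r⌉₊ with hmdef
    have hφ0 : ∀ y : ℝ, (m : ℝ) < |y| → φ y = 0 := by
      intro y hy
      apply image_eq_zero_of_notMem_tsupport
      intro hmem
      have h3 := hr hmem
      rw [Metric.mem_closedBall, Real.dist_eq, sub_zero] at h3
      have hrm : r ≤ (m : ℝ) := Nat.le_ceil r
      linarith
    -- the cutoff is in the family
    obtain ⟨k0, hk0⟩ : chiFn m ∈ Set.range e := he ▸ (Or.inr ⟨m, rfl⟩ : chiFn m ∈ S)
    have htendc : Tendsto (fun n => ∫ y, chiFn m y ∂(ν (xs n))) atTop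
        (nhds (∫ y, chiFn m y ∂(ν x))) := by
      have := hkey k0; rwa [hk0] at this
    set c : ℝ := ∫ y, chiFn m y ∂(ν x) with hcdef
    have hc0 : 0 ≤ c := integral_nonneg fun y => chiFn_nonneg m y
    rw [Metric.tendsto_atTop]
    intro ε hε
    set η : ℝ := ε / (4 * (c + 1)) with hηdef
    have hη : 0 < η := div_pos hε (by linarith)
    -- choose a close element of the dense family
    set φIm : C(↥(Set.Icc (-((m : ℝ) + 1)) ((m : ℝ) + 1)), ℝ) :=
      ⟨fun y => φ y, hφc.comp continuous_subtype_val⟩ with hφImdef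
    obtain ⟨g, hgD, hgdist⟩ := (hDd m).exists_dist_lt φIm hη
    have hgpt : ∀ y : ↥(Set.Icc (-((m : ℝ) + 1)) ((m : ℝ) + 1)), |φ y - g y| ≤ η := by
      intro y
      have := (ContinuousMap.dist_le hη.le).mp hgdist.le y
      rwa [Real.dist_eq] at this
    have hbound := extFn_approx hφ0 hη.le hgpt
    obtain ⟨k1, hk1⟩ : extFn m g ∈ Set.range e :=
      he ▸ (Or.inl (Set.mem_iUnion.mpr ⟨m, Set.mem_image_of_mem _ hgD⟩) : extFn m g ∈ S)
    have htendg : Tendsto (fun n => ∫ y, extFn m g y ∂(ν (xs n))) atTop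
        (nhds (∫ y, extFn m g y ∂(ν x))) := by
      have := hkey k1; rwa [hk1] at this
    -- integral comparison
    have hIb : ∀ z : X, |(∫ y, φ y ∂(ν z)) - ∫ y, extFn m g y ∂(ν z)| ≤
        η * ∫ y, chiFn m y ∂(ν z) := by
      intro z
      haveI := hfin z
      have hint1 : Integrable φ (ν z) := hφc.integrable_of_hasCompactSupport hφsupp
      have hint2 : Integrable (extFn m g) (ν z) :=
        (extFn_cont m g).integrable_of_hasCompactSupport (extFn_supp m g)
      have hint3 : Integrable (chiFn m) (ν z) :=
        (chiFn_cont m).integrable_of_hasCompactSupport (chiFn_supp m)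
      rw [← integral_sub hint1 hint2]
      have habs : |∫ y, (φ y - extFn m g y) ∂(ν z)| ≤ ∫ y, |φ y - extFn m g y| ∂(ν z) := by
        simpa [Real.norm_eq_abs] using
          norm_integral_le_integral_norm (μ := ν z) (fun y => φ y - extFn m g y)
      refine le_trans habs ?_
      calc ∫ y, |φ y - extFn m g y| ∂(ν z) ≤ ∫ y, η * chiFn m y ∂(ν z) :=
            integral_mono (hint1.sub hint2).abs (hint3.const_mul η) hbound
        _ = η * ∫ y, chiFn m y ∂(ν z) := integral_const_mul η _
    obtain ⟨N1, hN1⟩ := (Metric.tendsto_atTop.mp htendc) 1 one_pos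
    obtain ⟨N2, hN2⟩ := (Metric.tendsto_atTop.mp htendg) (ε / 4) (by positivity)
    refine ⟨max N1 N2, fun n hn => ?_⟩
    have hn1 := hN1 n (le_trans (le_max_left _ _) hn)
    have hn2 := hN2 n (le_trans (le_max_right _ _) hn)
    rw [Real.dist_eq] at hn1 hn2 ⊢
    have hcn : (∫ y, chiFn m y ∂(ν (xs n))) ≤ c + 1 := by
      have := abs_lt.mp hn1
      linarith [this.2]
    have hcn0 : 0 ≤ ∫ y, chiFn m y ∂(ν (xs n)) := integral_nonneg fun y => chiFn_nonneg m y
    have hηc1 : η * (c + 1) = ε / 4 := by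
      rw [hηdef]; field_simp
    have hb1 : |(∫ y, φ y ∂(ν (xs n))) - ∫ y, extFn m g y ∂(ν (xs n))| ≤ ε / 4 := by
      refine le_trans (hIb (xs n)) ?_
      rw [← hηc1]
      exact mul_le_mul_of_nonneg_left hcn hη.le
    have hb3 : |(∫ y, φ y ∂(ν x)) - ∫ y, extFn m g y ∂(ν x)| ≤ ε / 4 := by
      refine le_trans (hIb x) ?_
      rw [← hηc1]
      exact mul_le_mul_of_nonneg_left (by linarith) hη.le
    calc |(∫ y, φ y ∂(ν (xs n))) - ∫ y, φ y ∂(ν x)|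
        ≤ |(∫ y, φ y ∂(ν (xs n))) - ∫ y, extFn m g y ∂(ν (xs n))| +
          |(∫ y, extFn m g y ∂(ν (xs n))) - ∫ y, extFn m g y ∂(ν x)| +
          |(∫ y, extFn m g y ∂(ν x)) - ∫ y, φ y ∂(ν x)| := by
          have := abs_sub_le (∫ y, φ y ∂(ν (xs n))) (∫ y, extFn m g y ∂(ν (xs n)))
            (∫ y, φ y ∂(ν x))
          have h4 := abs_sub_le (∫ y, extFn m g y ∂(ν (xs n))) (∫ y, extFn m g y ∂(ν x))
            (∫ y, φ y ∂(ν x))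
          linarith
      _ ≤ ε / 4 + ε / 4 + ε / 4 := by
          rw [abs_sub_comm (∫ y, extFn m g y ∂(ν x))]
          exact add_le_add (add_le_add hb1 hn2.le) hb3
      _ < ε := by linarith
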